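/- Suppose X_f ⊆ X, and K ∈ ℝ^{m×n} is a terminal feedback gain such that for every x ∈ X_f one has K x ∈ U and (A+BK) x ∈ X_f. Let x_0 ∈ ℝ^n admit a feasible input sequence, and let (v_t)_{t∈ℕ} be any sequence of applied inputs such that for each t, v_t is the first element of some feasible input sequence for x_t, where x_{t+1} = A x_t + B v_t. Then for every t ∈ ℕ there exists a feasible input sequence for x_t (recursive feasibility of the closed loop). -/

import Mathlib

open Matrix

/-- State trajectory of the discrete-time linear system `x(k+1) = A x(k) + B u(k)`
starting from `x0` under the input sequence `u`. -/
def traj {n m : ℕ} (A : Matrix (Fin n) (Fin n) ℝ) (B : Matrix (Fin n) (Fin m) ℝ)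
    (x0 : Fin n → ℝ) (u : ℕ → Fin m → ℝ) : ℕ → Fin n → ℝ
  | 0 => x0
  | k + 1 => A.mulVec (traj A B x0 u k) + B.mulVec (u k)

/-- `u` is a feasible input sequence of horizon `N` for the state `x0`. -/
def Feasible {n m : ℕ} (A : Matrix (Fin n) (Fin n) ℝ) (B : Matrix (Fin n) (Fin m) ℝ)
    (X : Set (Fin n → ℝ)) (U : Set (Fin m → ℝ)) (Xf : Set (Fin n → ℝ))
    (N : ℕ) (x0 : Fin n → ℝ) (u : ℕ → Fin m → ℝ) : Prop :=
  (∀ k < N, u k ∈ U) ∧ (∀ k ≤ N, traj A B x0 u k ∈ X) ∧ traj A B x0 u N ∈ Xf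

lemma shift_feasible {n m N : ℕ} (hN : 1 ≤ N)
    (A : Matrix (Fin n) (Fin n) ℝ) (B : Matrix (Fin n) (Fin m) ℝ)
    (X : Set (Fin n → ℝ)) (U : Set (Fin m → ℝ)) (Xf : Set (Fin n → ℝ))
    (K : Matrix (Fin m) (Fin n) ℝ)
    (hXfX : Xf ⊆ X)
    (hK : ∀ x ∈ Xf, K.mulVec x ∈ U ∧ A.mulVec x + B.mulVec (K.mulVec x) ∈ Xf)
    (x0 : Fin n → ℝ) (u : ℕ → Fin m → ℝ) (hu : Feasible A B X U Xf N x0 u) :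
    ∃ u', Feasible A B X U Xf N (A.mulVec x0 + B.mulVec (u 0)) u' := by
  obtain ⟨hU, hX, hXf⟩ := hu
  set x1 := A.mulVec x0 + B.mulVec (u 0) with hx1
  set xN := traj A B x0 u N with hxN
  refine ⟨fun k => if k + 1 < N then u (k + 1) else K.mulVec xN, ?_, ?_, ?_⟩ <;>
    set u' : ℕ → Fin m → ℝ := fun k => if k + 1 < N then u (k + 1) else K.mulVec xN with hu'
  all_goals
    have key : ∀ k < N, traj A B x1 u' k = traj A B x0 u (k + 1) := by
      intro k
      induction k with
      | zero => intro _; simp [traj, hx1]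
      | succ k ih =>
        intro hk
        have hk' : k < N := Nat.lt_of_succ_lt hk
        have huk : u' k = u (k + 1) := by simp [hu', hk]
        simp [traj, ih hk', huk]
  all_goals
    have hlast : traj A B x1 u' N = A.mulVec xN + B.mulVec (K.mulVec xN) := by
      obtain ⟨M, rfl⟩ : ∃ M, N = M + 1 := ⟨N - 1, (Nat.succ_pred_eq_of_pos hN).symm⟩
      have hM : traj A B x1 u' M = xN := key M (Nat.lt_succ_self M)
      have huM : u' M = K.mulVec xN := by simp [hu']
      simp [traj, hM, huM]
  · intro k hk
    by_cases h : k + 1 < N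
    · simpa [hu', h] using hU (k + 1) h
    · simpa [hu', h] using (hK xN hXf).1
  · intro k hk
    rcases Nat.lt_or_ge k N with h | h
    · rw [key k h]; exact hX (k + 1) h
    · have : k = N := le_antisymm hk h
      subst this
      rw [hlast]
      exact hXfX (hK xN hXf).2
  · rw [hlast]; exact (hK xN hXf).2

/-- Recursive feasibility of the closed loop: if `x_0` admits a feasible input sequence
and at each time the applied input `v_t` is the first element of some feasible input
sequence for the current state `x_t`, then every closed-loop state `x_t` admits a
feasible input sequence. -/
theorem recursive_feasibility {n m N : ℕ} (hN : 1 ≤ N)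
    (A : Matrix (Fin n) (Fin n) ℝ) (B : Matrix (Fin n) (Fin m) ℝ)
    (X : Set (Fin n → ℝ)) (U : Set (Fin m → ℝ)) (Xf : Set (Fin n → ℝ))
    (K : Matrix (Fin m) (Fin n) ℝ)
    (hXfX : Xf ⊆ X)
    (hK : ∀ x ∈ Xf, K.mulVec x ∈ U ∧ A.mulVec x + B.mulVec (K.mulVec x) ∈ Xf)
    (x0 : Fin n → ℝ)
    (hx0 : ∃ u, Feasible A B X U Xf N x0 u)
    (v : ℕ → Fin m → ℝ) (x : ℕ → Fin n → ℝ)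
    (hxinit : x 0 = x0)
    (hdyn : ∀ t, x (t + 1) = A.mulVec (x t) + B.mulVec (v t))
    (hv : ∀ t, (∃ u, Feasible A B X U Xf N (x t) u) →
      ∃ u, Feasible A B X U Xf N (x t) u ∧ v t = u 0) :
    ∀ t, ∃ u, Feasible A B X U Xf N (x t) u := by
  intro t
  induction t with
  | zero => rwa [hxinit]
  | succ t ih =>
    obtain ⟨u, hu, hv0⟩ := hv t ih
    rw [hdyn t, hv0]
    exact shift_feasible hN A B X U Xf K hXfX hK (x t) u hu
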